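/- For every x ∈ ℝ^n the following are equivalent: (i) there exists y ∈ ℝ^d such that x − A_V^T y ∈ [0,1]^n; (ii) for every circuit C of the linear matroid M(V), −|a_C^−| ≤ ⟨a_C, x⟩ ≤ |a_C^+|. Equivalently, the zonotope Z(B), i.e. the image of [0,1]^n under the quotient map ℝ^n → ℝ^n / A_V^T ℝ^d, equals the intersection of the closed slabs −|a_C^−| ≤ a_C^*(z) ≤ |a_C^+| over all circuits C of M(V). -/

import Mathlib

open Matrix

/-- The real vector obtained from an integer vector by coordinatewise casting. -/
noncomputable def rVec {d : ℕ} (v : Fin d → ℤ) : Fin d → ℝ := fun j => (v j : ℝ)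

/-- The cone `C(V)` generated by the vectors `V i` (viewed in `ℝ^d`). -/
def coneOf {d n : ℕ} (V : Fin n → Fin d → ℤ) : Set (Fin d → ℝ) :=
  {x | ∃ a : Fin n → ℝ, (∀ i, 0 ≤ a i) ∧ x = ∑ i, a i • rVec (V i)}

/-- The standing hypotheses on the generators: pairwise distinct, nonzero, primitive,
a minimal generating system of the cone, and the cone is strongly convex. -/
def GoodGens {d n : ℕ} (V : Fin n → Fin d → ℤ) : Prop :=
  Function.Injective V ∧
  (∀ i, V i ≠ 0) ∧
  (∀ i, Finset.univ.gcd (V i) = 1) ∧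
  (∀ i, ¬ ∃ a : Fin n → ℝ, (∀ j, 0 ≤ a j) ∧ a i = 0 ∧
      rVec (V i) = ∑ j, a j • rVec (V j)) ∧
  (∀ x ∈ coneOf V, -x ∈ coneOf V → x = 0)

/-- `C` is a circuit of the linear matroid `M(V)`: the family `(v_i)_{i ∈ C}` is
`ℝ`-linearly dependent but every proper subfamily is linearly independent. -/
def IsCircuitV {d n : ℕ} (V : Fin n → Fin d → ℤ) (C : Finset (Fin n)) : Prop :=
  (¬ LinearIndependent ℝ fun i : C => rVec (V i)) ∧
  ∀ C' : Finset (Fin n), C' ⊂ C → LinearIndependent ℝ fun i : C' => rVec (V i)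


namespace ZonAux
variable {d n : ℕ} (V : Fin n → Fin d → ℤ)

def Zker (c : Fin n → ℝ) : Prop := ∀ j, ∑ i, c i * (V i j : ℝ) = 0

open Classical in
noncomputable def suppF (c : Fin n → ℝ) : Finset (Fin n) :=
  Finset.univ.filter (fun i => c i ≠ 0)

lemma mem_suppF {c : Fin n → ℝ} {i : Fin n} : i ∈ suppF c ↔ c i ≠ 0 := by
  classical
  simp [suppF]

lemma suppF_nonempty {c : Fin n → ℝ} (hc : c ≠ 0) : (suppF c).Nonempty := by
  obtain ⟨i, hi⟩ := Function.ne_iff.mp hc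
  exact ⟨i, mem_suppF.mpr hi⟩

variable {V}

lemma Zker_sub_smul {c e : Fin n → ℝ} (t : ℝ) (hc : Zker V c) (he : Zker V e) :
    Zker V (fun i => c i - t * e i) := by
  intro j
  simp only [sub_mul, Finset.sum_sub_distrib, hc j]
  have h : ∑ i, t * e i * (V i j : ℝ) = t * ∑ i, e i * (V i j : ℝ) := by
    rw [Finset.mul_sum]; congr 1; funext i; ring
  rw [h, he j]; ring

lemma Zker_smul {e : Fin n → ℝ} (t : ℝ) (he : Zker V e) :
    Zker V (fun i => t * e i) := by
  intro j
  have h : ∑ i, t * e i * (V i j : ℝ) = t * ∑ i, e i * (V i j : ℝ) := by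
    rw [Finset.mul_sum]; congr 1; funext i; ring
  rw [h, he j]; ring

lemma sum_vec_eq_zero {c : Fin n → ℝ} (hker : Zker V c) :
    ∑ i, c i • rVec (V i) = 0 := by
  funext j
  rw [Finset.sum_apply]
  simpa [rVec] using hker j

lemma notLI_of_kervec {C : Finset (Fin n)} {c : Fin n → ℝ} (hc : c ≠ 0)
    (hker : Zker V c) (hsupp : suppF c ⊆ C) :
    ¬ LinearIndependent ℝ (fun i : C => rVec (V i)) := by
  rw [Fintype.not_linearIndependent_iff]
  refine ⟨fun i => c i, ?_, ?_⟩
  · have h1 : ∑ i : C, c (i : Fin n) • rVec (V i) = ∑ i ∈ C, c i • rVec (V i) :=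
      Finset.sum_coe_sort C (fun i => c i • rVec (V i))
    rw [h1]
    have h2 : ∑ i ∈ C, c i • rVec (V i) = ∑ i, c i • rVec (V i) := by
      apply Finset.sum_subset (Finset.subset_univ C)
      intro i _ hiC
      have : c i = 0 := by
        by_contra h
        exact hiC (hsupp (mem_suppF.mpr h))
      simp [this]
    rw [h2, sum_vec_eq_zero hker]
  · obtain ⟨i, hi⟩ := suppF_nonempty hc
    exact ⟨⟨i, hsupp hi⟩, mem_suppF.mp hi⟩

lemma kervec_of_notLI {C : Finset (Fin n)}
    (h : ¬ LinearIndependent ℝ (fun i : C => rVec (V i))) :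
    ∃ c : Fin n → ℝ, c ≠ 0 ∧ Zker V c ∧ suppF c ⊆ C := by
  classical
  rw [Fintype.not_linearIndependent_iff] at h
  obtain ⟨g, hsum, i0, hi0⟩ := h
  refine ⟨fun i => if h : i ∈ C then g ⟨i, h⟩ else 0, ?_, ?_, ?_⟩
  · intro h0
    apply hi0
    have := congrFun h0 (i0 : Fin n)
    simpa [i0.2] using this
  · intro j
    have h1 : ∑ i, (if h : i ∈ C then g ⟨i, h⟩ else 0) * (V i j : ℝ)
        = ∑ i ∈ C, (if h : i ∈ C then g ⟨i, h⟩ else 0) * (V i j : ℝ) := by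
      symm
      apply Finset.sum_subset (Finset.subset_univ C)
      intro i _ hiC
      simp [hiC]
    rw [h1, ← Finset.sum_coe_sort C]
    have := congrFun hsum j
    rw [Finset.sum_apply] at this
    simpa [rVec] using this
  · intro i hi
    rw [mem_suppF] at hi
    by_contra hiC
    simp [hiC] at hi

lemma eq_zero_of_LI {C : Finset (Fin n)}
    (hLI : LinearIndependent ℝ (fun i : C => rVec (V i)))
    {c : Fin n → ℝ} (hker : Zker V c) (hsupp : suppF c ⊆ C) : c = 0 := by
  by_contra hc
  exact notLI_of_kervec hc hker hsupp hLI

end ZonAux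

namespace ZonAux
variable {d n : ℕ} {V : Fin n → Fin d → ℤ}

lemma exists_elementary {c : Fin n → ℝ} (hc : c ≠ 0) (hker : Zker V c) :
    ∃ e : Fin n → ℝ, e ≠ 0 ∧ Zker V e ∧ suppF e ⊆ suppF c ∧
      (∀ i, e i ≠ 0 → 0 < c i * e i) ∧ IsCircuitV V (suppF e) := by
  classical
  set P : (Fin n → ℝ) → Prop := fun e => e ≠ 0 ∧ Zker V e ∧ suppF e ⊆ suppF c ∧
      (∀ i, e i ≠ 0 → 0 < c i * e i) with hP
  have hPc : P c := by
    refine ⟨hc, hker, Finset.Subset.refl _, fun i hi => ?_⟩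
    refine mul_pos_iff.mpr ?_
    rcases lt_trichotomy (c i) 0 with h|h|h
    · exact Or.inr ⟨h, h⟩
    · exact absurd h hi
    · exact Or.inl ⟨h, h⟩
  have hex : ∃ m, ∃ e, P e ∧ (suppF e).card = m := ⟨_, c, hPc, rfl⟩
  obtain ⟨e, hPe, hcard⟩ := Nat.find_spec hex
  obtain ⟨hene, heker, hesupp, heconf⟩ := hPe
  refine ⟨e, hene, heker, hesupp, heconf, ?_, ?_⟩
  · exact notLI_of_kervec hene heker (Finset.Subset.refl _)
  · intro C' hC'
    by_contra hLI
    obtain ⟨f, hf0, hfker, hfsupp⟩ := kervec_of_notLI hLI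
    have hfsuppe : suppF f ⊆ suppF e := hfsupp.trans hC'.subset
    obtain ⟨i1, hi1⟩ := suppF_nonempty hf0
    have hfi1 : f i1 ≠ 0 := mem_suppF.mp hi1
    have hei1 : e i1 ≠ 0 := mem_suppF.mp (hfsuppe hi1)
    set s : ℝ := if 0 < e i1 * f i1 then 1 else -1 with hs
    have hsne : s ≠ 0 := by rw [hs]; split <;> norm_num
    set f' : Fin n → ℝ := fun i => s * f i with hf'
    have hf'ker : Zker V f' := Zker_smul s hfker
    have hf'nz : ∀ i, f' i ≠ 0 ↔ f i ≠ 0 := by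
      intro i; simp [hf', hsne]
    have h1 : 0 < e i1 * f' i1 := by
      rw [hf']
      by_cases h : 0 < e i1 * f i1
      · simpa [hs, h] using h
      · have hne : e i1 * f i1 ≠ 0 := mul_ne_zero hei1 hfi1
        have hlt : e i1 * f i1 < 0 := lt_of_le_of_ne (not_lt.mp h) hne
        simp only [hs, if_neg h]
        nlinarith
    set T : Finset (Fin n) := (suppF e).filter (fun i => 0 < e i * f' i) with hT
    have hi1T : i1 ∈ T := by
      rw [hT, Finset.mem_filter]
      exact ⟨mem_suppF.mpr hei1, h1⟩
    obtain ⟨i0, hi0T, hi0min⟩ := T.exists_min_image (fun i => e i / f' i) ⟨i1, hi1T⟩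
    have hi0pos : 0 < e i0 * f' i0 := (Finset.mem_filter.mp hi0T).2
    have hf'i0 : f' i0 ≠ 0 := by
      intro h; rw [h, mul_zero] at hi0pos; exact lt_irrefl _ hi0pos
    have hei0 : e i0 ≠ 0 := mem_suppF.mp (Finset.mem_filter.mp hi0T).1
    set t : ℝ := e i0 / f' i0 with ht'
    have ht : 0 < t := by
      rw [ht']
      rcases mul_pos_iff.mp hi0pos with ⟨h1', h2'⟩ | ⟨h1', h2'⟩
      · exact div_pos h1' h2'
      · exact div_pos_of_neg_of_neg h1' h2'
    set g : Fin n → ℝ := fun i => e i - t * f' i with hg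
    have hgker : Zker V g := Zker_sub_smul t heker hf'ker
    have hg_zero_of : ∀ i, e i = 0 → g i = 0 := by
      intro i hi
      have : i ∉ suppF f := fun h => (mem_suppF.mp (hfsuppe h)) hi
      have hfi : f i = 0 := by_contra fun h => this (mem_suppF.mpr h)
      simp [hg, hi, hf', hfi]
    have hgsupp : suppF g ⊆ suppF e := by
      intro i hi
      rw [mem_suppF] at hi ⊢
      exact fun h => hi (hg_zero_of i h)
    have hgi0 : g i0 = 0 := by
      rw [hg]; simp only [ht']
      field_simp
      ring
    have hgne : g ≠ 0 := by
      obtain ⟨i2, hi2e, hi2C'⟩ := Finset.exists_of_ssubset hC'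
      have hfi2 : f i2 = 0 := by
        by_contra h
        exact hi2C' (hfsupp (mem_suppF.mpr h))
      intro h
      have := congrFun h i2
      rw [hg] at this
      simp only [hf', hfi2, mul_zero, sub_zero] at this
      exact (mem_suppF.mp hi2e) this
    have hgconf : ∀ i, g i ≠ 0 → 0 < c i * g i := by
      intro i hgi
      have hei : e i ≠ 0 := fun h => hgi (hg_zero_of i h)
      have hcei : 0 < c i * e i := heconf i hei
      have hci : c i ≠ 0 := fun h => by rw [h, zero_mul] at hcei; exact lt_irrefl _ hcei
      have hgieq : g i = e i - t * f' i := rfl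
      have hle : 0 ≤ c i * g i := by
        rw [hgieq]
        by_cases hfi : f' i = 0
        · simp only [hfi, mul_zero, sub_zero]; exact le_of_lt hcei
        · rcases lt_trichotomy (e i * f' i) 0 with hneg | h0 | hpos
          · have he2 : 0 < (e i)^2 := by positivity
            have hcfi : c i * f' i < 0 := by nlinarith [mul_pos hcei (neg_pos.mpr hneg)]
            nlinarith [mul_pos ht (neg_pos.mpr hcfi)]
          · exact absurd h0 (mul_ne_zero hei hfi)
          · have hiT : i ∈ T := Finset.mem_filter.mpr ⟨mem_suppF.mpr hei, hpos⟩
            have hmin : t ≤ e i / f' i := hi0min i hiT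
            have he2 : 0 < (e i)^2 := by positivity
            have hcfi : 0 < c i * f' i := by nlinarith [mul_pos hcei hpos]
            have hstep : t * (c i * f' i) ≤ (e i / f' i) * (c i * f' i) :=
              mul_le_mul_of_nonneg_right hmin (le_of_lt hcfi)
            have heq : (e i / f' i) * (c i * f' i) = c i * e i := by
              field_simp
            nlinarith
      exact lt_of_le_of_ne hle (Ne.symm (mul_ne_zero hci hgi))
    -- g has strictly smaller support: contradiction with minimality
    have hgssub : suppF g ⊂ suppF e := by
      refine ⟨hgsupp, fun h => ?_⟩
      have : i0 ∈ suppF g := h (mem_suppF.mpr hei0)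
      exact (mem_suppF.mp this) hgi0
    have hlt : (suppF g).card < (suppF e).card := Finset.card_lt_card hgssub
    rw [hcard] at hlt
    exact Nat.find_min hex hlt ⟨g, ⟨hgne, hgker, hgsupp.trans hesupp, hgconf⟩, rfl⟩

end ZonAux

namespace ZonAux
variable {d n : ℕ} {V : Fin n → Fin d → ℤ}

lemma exists_int_circuit_vec {e : Fin n → ℝ} (hene : e ≠ 0) (heker : Zker V e)
    (hcirc : IsCircuitV V (suppF e)) :
    ∃ (a : Fin n → ℤ) (μ : ℝ), (∀ j, ∑ i, a i * V i j = 0) ∧ Finset.univ.gcd a = 1 ∧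
      (∀ i, a i ≠ 0 ↔ i ∈ suppF e) ∧ μ ≠ 0 ∧ ∀ i, e i = μ * (a i : ℝ) := by
  classical
  set C := suppF e with hC
  -- e vanishes outside C, and sums over C equal sums over univ
  have hCe : ∀ i, i ∉ C → e i = 0 := by
    intro i hi
    by_contra h
    exact hi (mem_suppF.mpr h)
  -- Gram matrix over ℤ
  set G : Matrix C C ℤ := fun i j => ∑ k, V (i : Fin n) k * V (j : Fin n) k with hG
  have keyR : ∀ k, ∑ j : C, e (j : Fin n) * (V (j : Fin n) k : ℝ) = 0 := by
    intro k
    rw [Finset.sum_coe_sort C (fun j => e j * (V j k : ℝ))]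
    rw [Finset.sum_subset (Finset.subset_univ C) (by
      intro i _ hiC
      rw [hCe i hiC, zero_mul])]
    exact heker k
  -- real Gram has nontrivial kernel
  have hGr : ∃ v : C → ℝ, v ≠ 0 ∧ (G.map (Int.cast : ℤ → ℝ)) *ᵥ v = 0 := by
    refine ⟨fun i => e i, ?_, ?_⟩
    · obtain ⟨i, hi⟩ := suppF_nonempty hene
      intro h
      exact (mem_suppF.mp hi) (congrFun h ⟨i, hi⟩)
    · funext i
      simp only [Matrix.mulVec, dotProduct, Matrix.map_apply, Pi.zero_apply]
      simp only [hG]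
      push_cast
      have : ∀ j : C, (∑ k, (V (i:Fin n) k : ℝ) * (V (j:Fin n) k : ℝ)) * e j
          = ∑ k, (V (i:Fin n) k : ℝ) * (e (j:Fin n) * (V (j:Fin n) k : ℝ)) := by
        intro j
        rw [Finset.sum_mul]
        exact Finset.sum_congr rfl (fun k _ => by ring)
      rw [Finset.sum_congr rfl (fun j _ => this j), Finset.sum_comm]
      rw [Finset.sum_congr rfl (fun k (_ : k ∈ Finset.univ) => (Finset.mul_sum _ _ _).symm)]
      rw [Finset.sum_congr rfl (fun k (_ : k ∈ Finset.univ) => by rw [keyR k, mul_zero])]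
      exact Finset.sum_const_zero
  -- hence det of integer Gram vanishes
  have hdetR : (G.map (Int.cast : ℤ → ℝ)).det = 0 := by
    rw [← Matrix.exists_mulVec_eq_zero_iff]
    exact hGr
  have hdetZ : G.det = 0 := by
    have h := RingHom.map_det (Int.castRingHom ℝ) G
    rw [RingHom.mapMatrix_apply] at h
    simp only [Int.coe_castRingHom] at h
    exact_mod_cast h.trans hdetR
  -- rational kernel vector of the Gram matrix
  have hdetQ : (G.map (Int.cast : ℤ → ℚ)).det = 0 := by
    have h := RingHom.map_det (Int.castRingHom ℚ) G
    rw [RingHom.mapMatrix_apply] at h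
    simp only [Int.coe_castRingHom] at h
    rw [← h, hdetZ]
    simp
  obtain ⟨q, hq0, hqker⟩ := Matrix.exists_mulVec_eq_zero_iff.mpr hdetQ
  -- the rational combination of the v_i with coefficients q vanishes
  set M : Matrix (Fin d) C ℚ := fun k i => (V (i : Fin n) k : ℚ) with hM
  have hGq : G.map (Int.cast : ℤ → ℚ) = Mᵀ * M := by
    ext i j
    simp only [Matrix.map_apply, Matrix.mul_apply, Matrix.transpose_apply]
    simp only [hG, hM]
    push_cast
    rfl
  have hsq : (M *ᵥ q) ⬝ᵥ (M *ᵥ q) = 0 := by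
    have h1 : q ⬝ᵥ ((G.map (Int.cast : ℤ → ℚ)) *ᵥ q) = 0 := by rw [hqker]; simp
    rw [hGq, ← Matrix.mulVec_mulVec, Matrix.dotProduct_mulVec, Matrix.vecMul_transpose] at h1
    exact h1
  have hw : ∀ k, (M *ᵥ q) k = 0 := by
    have h2 : ∑ k, (M *ᵥ q) k * (M *ᵥ q) k = 0 := hsq
    intro k
    have h3 := (Finset.sum_eq_zero_iff_of_nonneg
      (fun k _ => mul_self_nonneg ((M *ᵥ q) k))).mp h2 k (Finset.mem_univ k)
    exact mul_self_eq_zero.mp h3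
  have hkq : ∀ k, ∑ j : C, q j * (V (j : Fin n) k : ℚ) = 0 := by
    intro k
    have := hw k
    simp only [Matrix.mulVec, dotProduct, hM] at this
    rw [← this]
    exact Finset.sum_congr rfl (fun j _ => mul_comm _ _)
  -- extend q to all of Fin n by zero
  set qt : Fin n → ℚ := fun i => if h : i ∈ C then q ⟨i, h⟩ else 0 with hqt
  have hqtC : ∀ i, i ∉ C → qt i = 0 := by intro i hi; simp [hqt, hi]
  have hqtker : ∀ k, ∑ i, qt i * (V i k : ℚ) = 0 := by
    intro k
    have h1 : ∑ i, qt i * (V i k : ℚ) = ∑ i ∈ C, qt i * (V i k : ℚ) := by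
      symm
      apply Finset.sum_subset (Finset.subset_univ C)
      intro i _ hiC
      rw [hqtC i hiC, zero_mul]
    rw [h1, ← Finset.sum_coe_sort C (fun i => qt i * (V i k : ℚ))]
    rw [← hkq k]
    refine Finset.sum_congr rfl (fun j _ => ?_)
    congr 1
    simp [hqt, j.2]
  have hqtne : qt ≠ 0 := by
    obtain ⟨j, hj⟩ := Function.ne_iff.mp hq0
    intro h
    apply hj
    have := congrFun h (j : Fin n)
    simpa [hqt, j.2] using this
  -- real version
  set eR : Fin n → ℝ := fun i => ((qt i : ℚ) : ℝ) with heR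
  have heRker : Zker V eR := by
    intro k
    have := hqtker k
    have h2 : ((∑ i, qt i * (V i k : ℚ) : ℚ) : ℝ) = 0 := by rw [this]; simp
    push_cast at h2
    exact h2
  have heRne : eR ≠ 0 := by
    obtain ⟨i, hi⟩ := Function.ne_iff.mp hqtne
    intro h
    apply hi
    have := congrFun h i
    simpa [heR] using this
  have heRsupp : suppF eR ⊆ C := by
    intro i hi
    rw [mem_suppF] at hi
    by_contra hiC
    rw [heR] at hi
    simp [hqtC i hiC] at hi
  have heRsuppEq : suppF eR = C := by
    by_contra hne
    have hss : suppF eR ⊂ C := lt_of_le_of_ne heRsupp hne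
    exact heRne (eq_zero_of_LI (hcirc.2 _ hss) heRker (Finset.Subset.refl _))
  -- proportionality: e = μ' • eR
  obtain ⟨i0, hi0⟩ := suppF_nonempty hene
  have heRi0 : eR i0 ≠ 0 := mem_suppF.mp (heRsuppEq ▸ hi0)
  set μ' : ℝ := e i0 / eR i0 with hμ'
  have hμ'ne : μ' ≠ 0 := div_ne_zero (mem_suppF.mp hi0) heRi0
  have hprop : ∀ i, e i = μ' * eR i := by
    set h : Fin n → ℝ := fun i => e i - μ' * eR i with hh
    have hhker : Zker V h := Zker_sub_smul μ' heker heRker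
    have hhsupp : suppF h ⊆ C.erase i0 := by
      intro i hi
      rw [mem_suppF] at hi
      rw [Finset.mem_erase]
      constructor
      · intro hEq
        apply hi
        rw [hh, hEq, hμ']
        field_simp
        ring
      · by_contra hiC
        apply hi
        have h1 : e i = 0 := hCe i hiC
        have h2 : eR i = 0 := by
          by_contra h2
          exact hiC (heRsuppEq ▸ mem_suppF.mpr h2)
        simp [hh, h1, h2]
    have hLI := hcirc.2 _ (Finset.erase_ssubset hi0)
    have hh0 : h = 0 := eq_zero_of_LI hLI hhker hhsupp
    intro i
    have h2 : e i - μ' * eR i = 0 := congrFun hh0 i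
    linarith
  -- clear denominators
  set D : ℤ := ∏ i, ((qt i).den : ℤ) with hD
  have hDpos : 0 < D := Finset.prod_pos (fun i _ => by exact_mod_cast (qt i).den_pos)
  have hDne : D ≠ 0 := ne_of_gt hDpos
  set b : Fin n → ℤ := fun i => (qt i).num * (D / ((qt i).den : ℤ)) with hb
  have hbq : ∀ i, (b i : ℚ) = qt i * (D : ℚ) := by
    intro i
    have hdvd : ((qt i).den : ℤ) ∣ D := Finset.dvd_prod_of_mem _ (Finset.mem_univ i)
    obtain ⟨m, hm⟩ := hdvd
    have hden0 : ((qt i).den : ℤ) ≠ 0 := by exact_mod_cast (qt i).den_pos.ne'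
    rw [hb]
    simp only [hm, Int.mul_ediv_cancel_left _ hden0]
    push_cast
    rw [← mul_assoc, Rat.mul_den_eq_num]
  have hbker : ∀ k, ∑ i, b i * V i k = 0 := by
    intro k
    have h2 : ∑ i, (b i : ℚ) * (V i k : ℚ) = 0 := by
      have h3 : ∀ i, (b i : ℚ) * (V i k : ℚ) = (D : ℚ) * (qt i * (V i k : ℚ)) := by
        intro i; rw [hbq i]; ring
      rw [Finset.sum_congr rfl (fun i _ => h3 i), ← Finset.mul_sum, hqtker k, mul_zero]
    exact_mod_cast h2
  have hbne : ∀ i, b i ≠ 0 ↔ qt i ≠ 0 := by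
    intro i
    constructor
    · intro hbi h
      apply hbi
      have : (b i : ℚ) = 0 := by rw [hbq i, h, zero_mul]
      exact_mod_cast this
    · intro hq hbi
      apply hq
      have : qt i * (D : ℚ) = 0 := by rw [← hbq i, hbi]; simp
      rcases mul_eq_zero.mp this with h | h
      · exact h
      · exact absurd (by exact_mod_cast h) hDne
  obtain ⟨iW, hiW⟩ := Function.ne_iff.mp hqtne
  have hbiW : b iW ≠ 0 := (hbne iW).mpr hiW
  set g : ℤ := Finset.univ.gcd b with hg
  have hgne : g ≠ 0 := by
    rw [hg]
    intro h
    exact hbiW (Finset.gcd_eq_zero_iff.mp h iW (Finset.mem_univ iW))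
  set a : Fin n → ℤ := fun i => b i / g with ha
  have hba : ∀ i, b i = g * a i := by
    intro i
    rw [ha]
    exact (Int.mul_ediv_cancel' (Finset.gcd_dvd (Finset.mem_univ i))).symm
  have hgcda : Finset.univ.gcd a = 1 := by
    rw [ha, hg]
    exact Finset.gcd_div_eq_one (Finset.mem_univ iW) hbiW
  have haker : ∀ k, ∑ i, a i * V i k = 0 := by
    intro k
    have h1 : g * ∑ i, a i * V i k = 0 := by
      rw [Finset.mul_sum]
      rw [Finset.sum_congr rfl (fun i _ => by rw [← mul_assoc, ← hba i])]
      exact hbker k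
    rcases mul_eq_zero.mp h1 with h | h
    · exact absurd h hgne
    · exact h
  have heRqt : ∀ i, eR i = 0 ↔ qt i = 0 := by
    intro i
    constructor
    · intro h
      exact_mod_cast (show ((qt i : ℚ) : ℝ) = 0 from h)
    · intro h
      show ((qt i : ℚ) : ℝ) = 0
      rw [h]; simp
  have hane : ∀ i, a i ≠ 0 ↔ i ∈ C := by
    intro i
    rw [← heRsuppEq, mem_suppF]
    have hchain : b i = 0 ↔ qt i = 0 := by
      constructor
      · intro h
        by_contra hq
        exact (hbne i).mpr hq h
      · intro h
        by_contra hb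
        exact (hbne i).mp hb h
    have key : a i = 0 ↔ eR i = 0 := by
      rw [heRqt i, ← hchain]
      constructor
      · intro h
        rw [hba i, h, mul_zero]
      · intro h
        show b i / g = 0
        rw [h, Int.zero_ediv]
    exact not_congr key
  -- the real scaling factor
  refine ⟨a, μ' * (g : ℝ) / (D : ℝ), haker, hgcda, hane, ?_, ?_⟩
  · apply div_ne_zero
    · exact mul_ne_zero hμ'ne (by exact_mod_cast hgne)
    · exact_mod_cast hDne
  · intro i
    have hDQne : (D : ℚ) ≠ 0 := by exact_mod_cast hDne
    have hDRne : (D : ℝ) ≠ 0 := by exact_mod_cast hDne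
    have h3 : (b i : ℚ) = (g : ℚ) * (a i : ℚ) := by exact_mod_cast hba i
    have h2 : qt i = (g : ℚ) * (a i : ℚ) / (D : ℚ) := by
      rw [← h3]
      rw [hbq i]
      field_simp
    have h1 : eR i = (g : ℝ) * (a i : ℝ) / (D : ℝ) := by
      show ((qt i : ℚ) : ℝ) = _
      rw [h2]
      push_cast
      ring
    rw [hprop i, h1]
    field_simp

end ZonAux

namespace ZonAux
variable {d n : ℕ} {V : Fin n → Fin d → ℤ}

lemma max_add_max_le {p q : ℝ} (h : 0 ≤ p * q) : max p 0 + max q 0 ≤ max (p + q) 0 := by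
  rcases mul_nonneg_iff.mp h with ⟨hp, hq⟩ | ⟨hp, hq⟩
  · rw [max_eq_left hp, max_eq_left hq, max_eq_left (by linarith)]
  · rw [max_eq_right hp, max_eq_right hq]
    simpa using le_max_right (p + q) 0

lemma elementary_bound {x : Fin n → ℝ}
    (H : ∀ C : Finset (Fin n), IsCircuitV V C →
      ∀ a : Fin n → ℤ, (∀ j, ∑ i, a i * V i j = 0) → Finset.univ.gcd a = 1 →
        (∀ i, a i ≠ 0 ↔ i ∈ C) →
        (-(∑ i, max (-(a i : ℝ)) 0) ≤ ∑ i, (a i : ℝ) * x i ∧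
          ∑ i, (a i : ℝ) * x i ≤ ∑ i, max ((a i : ℝ)) 0))
    {e : Fin n → ℝ} (hene : e ≠ 0) (heker : Zker V e) (hcirc : IsCircuitV V (suppF e)) :
    ∑ i, e i * x i ≤ ∑ i, max (e i) 0 := by
  obtain ⟨a, μ, haker, hgcd, hane, hμ, hprop⟩ := exists_int_circuit_vec hene heker hcirc
  obtain ⟨hlow, hup⟩ := H _ hcirc a haker hgcd hane
  have hsum : ∑ i, e i * x i = μ * ∑ i, (a i : ℝ) * x i := by
    rw [Finset.mul_sum]
    exact Finset.sum_congr rfl (fun i _ => by rw [hprop i]; ring)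
  rcases lt_or_gt_of_ne hμ with hneg | hpos
  · have h1 : ∑ i, max (e i) 0 = (-μ) * ∑ i, max (-(a i : ℝ)) 0 := by
      rw [Finset.mul_sum]
      refine Finset.sum_congr rfl (fun i _ => ?_)
      rw [hprop i, mul_max_of_nonneg _ _ (by linarith : (0:ℝ) ≤ -μ), neg_mul_neg, mul_zero]
    rw [hsum, h1]
    have h2 := mul_le_mul_of_nonpos_left hlow (le_of_lt hneg)
    nlinarith [h2]
  · have h1 : ∑ i, max (e i) 0 = μ * ∑ i, max ((a i : ℝ)) 0 := by
      rw [Finset.mul_sum]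
      refine Finset.sum_congr rfl (fun i _ => ?_)
      rw [hprop i, mul_max_of_nonneg _ _ (le_of_lt hpos), mul_zero]
    rw [hsum, h1]
    exact mul_le_mul_of_nonneg_left hup (le_of_lt hpos)

lemma sum_le_of_ker {x : Fin n → ℝ}
    (Hb : ∀ e : Fin n → ℝ, e ≠ 0 → Zker V e → IsCircuitV V (suppF e) →
      ∑ i, e i * x i ≤ ∑ i, max (e i) 0) :
    ∀ c : Fin n → ℝ, Zker V c → ∑ i, c i * x i ≤ ∑ i, max (c i) 0 := by
  suffices h : ∀ m (c : Fin n → ℝ), (suppF c).card ≤ m → Zker V c →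
      ∑ i, c i * x i ≤ ∑ i, max (c i) 0 by
    intro c hc
    exact h ((suppF c).card) c le_rfl hc
  intro m
  induction m with
  | zero =>
    intro c hcard _
    have hsupp : suppF c = ∅ := Finset.card_eq_zero.mp (Nat.le_zero.mp hcard)
    have hc : ∀ i, c i = 0 := by
      intro i
      by_contra h
      exact Finset.eq_empty_iff_forall_notMem.mp hsupp i (mem_suppF.mpr h)
    simp [hc]
  | succ m ih =>
    intro c hcard hker
    by_cases hc0 : c = 0
    · simp [hc0]
    · obtain ⟨e, hene, heker, hesupp, heconf, hecirc⟩ := exists_elementary hc0 hker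
      obtain ⟨i0, hi0e, hi0min⟩ := (suppF e).exists_min_image (fun i => c i / e i)
        (suppF_nonempty hene)
      have hei0 : e i0 ≠ 0 := mem_suppF.mp hi0e
      have hcei0 : 0 < c i0 * e i0 := heconf i0 hei0
      set t : ℝ := c i0 / e i0 with htdef
      have ht : 0 < t := by
        rw [htdef]
        rcases mul_pos_iff.mp hcei0 with ⟨h1, h2⟩ | ⟨h1, h2⟩
        · exact div_pos h1 h2
        · exact div_pos_of_neg_of_neg h1 h2
      set c' : Fin n → ℝ := fun i => c i - t * e i with hc'def
      have hc'ker : Zker V c' := Zker_sub_smul t hker heker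
      have hconf : ∀ i, 0 ≤ c' i * e i := by
        intro i
        by_cases hei : e i = 0
        · show 0 ≤ (c i - t * e i) * e i
          rw [hei]; simp
        · have hcei : 0 < c i * e i := heconf i hei
          have hmin : t ≤ c i / e i := hi0min i (mem_suppF.mpr hei)
          have he2 : 0 < (e i)^2 := by positivity
          have heq : (c i / e i) * (e i)^2 = c i * e i := by
            field_simp
          have hstep : t * (e i)^2 ≤ (c i / e i) * (e i)^2 :=
            mul_le_mul_of_nonneg_right hmin (le_of_lt he2)
          show 0 ≤ (c i - t * e i) * e i
          nlinarith
      have hzero_of : ∀ i, c i = 0 → c' i = 0 := by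
        intro i hi
        have hie : i ∉ suppF c := fun h => (mem_suppF.mp h) hi
        have : e i = 0 := by
          by_contra h
          exact hie (hesupp (mem_suppF.mpr h))
        show c i - t * e i = 0
        rw [hi, this, mul_zero, sub_zero]
      have hsub : suppF c' ⊆ suppF c := by
        intro i hi
        rw [mem_suppF] at hi ⊢
        exact fun h => hi (hzero_of i h)
      have hc'i0 : c' i0 = 0 := by
        show c i0 - t * e i0 = 0
        rw [htdef]
        field_simp
        ring
      have hssub : suppF c' ⊂ suppF c := by
        refine ⟨hsub, fun h => ?_⟩
        have hi0c : i0 ∈ suppF c := hesupp hi0e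
        exact (mem_suppF.mp (h hi0c)) hc'i0
      have hcard' : (suppF c').card ≤ m :=
        Nat.lt_succ_iff.mp (lt_of_lt_of_le (Finset.card_lt_card hssub) hcard)
      have IH := ih c' hcard' hc'ker
      have He := Hb e hene heker hecirc
      have hptwise : ∀ i, max (c' i) 0 + t * max (e i) 0 ≤ max (c i) 0 := by
        intro i
        have h1 : t * max (e i) 0 = max (t * e i) 0 := by
          rw [mul_max_of_nonneg _ _ (le_of_lt ht), mul_zero]
        rw [h1]
        have h2 : 0 ≤ c' i * (t * e i) := by nlinarith [hconf i]
        have h3 := max_add_max_le h2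
        have h4 : c' i + t * e i = c i := by
          show (c i - t * e i) + t * e i = c i
          ring
        rwa [h4] at h3
      calc ∑ i, c i * x i = ∑ i, (c' i * x i + t * (e i * x i)) := by
            refine Finset.sum_congr rfl (fun i _ => ?_)
            show c i * x i = (c i - t * e i) * x i + t * (e i * x i)
            ring
        _ = ∑ i, c' i * x i + t * ∑ i, e i * x i := by
            rw [Finset.sum_add_distrib, Finset.mul_sum]
        _ ≤ ∑ i, max (c' i) 0 + t * ∑ i, max (e i) 0 :=
            add_le_add IH (mul_le_mul_of_nonneg_left He (le_of_lt ht))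
        _ = ∑ i, (max (c' i) 0 + t * max (e i) 0) := by
            rw [Finset.sum_add_distrib, Finset.mul_sum]
        _ ≤ ∑ i, max (c i) 0 := Finset.sum_le_sum (fun i _ => hptwise i)

end ZonAux

open scoped Pointwise
namespace ZonAux
variable {d n : ℕ}

lemma eq_zero_of_forall_mul_lt {r u : ℝ} (h : ∀ t : ℝ, t * r < u) : r = 0 := by
  by_contra hr
  have h1 := h ((u + 1) / r)
  rw [div_mul_cancel₀ _ hr] at h1
  linarith

lemma separation {V : Fin n → Fin d → ℤ} {x : Fin n → ℝ}
    (hx : ¬ ∃ y : Fin d → ℝ, ∀ i, x i - ∑ j, (V i j : ℝ) * y j ∈ Set.Icc (0:ℝ) 1) :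
    ∃ c : Fin n → ℝ, Zker V c ∧ ∑ i, max (c i) 0 < ∑ i, c i * x i := by
  classical
  set M : Matrix (Fin n) (Fin d) ℝ := fun i j => (V i j : ℝ) with hM
  set B := M.mulVecLin with hB
  have hBapp : ∀ (y : Fin d → ℝ) i, B y i = ∑ j, M i j * y j := by
    intro y i
    simp [hB, Matrix.mulVecLin_apply, Matrix.mulVec, dotProduct]
  set K : Set (Fin n → ℝ) := Set.Icc 0 1 with hK
  set S : Set (Fin n → ℝ) := K + (LinearMap.range B : Set (Fin n → ℝ)) with hS
  have hxS : x ∉ S := by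
    intro hmem
    rw [hS, Set.mem_add] at hmem
    obtain ⟨k, hk, w, hw, hsum⟩ := hmem
    obtain ⟨y, hy⟩ := hw
    apply hx
    refine ⟨y, fun i => ?_⟩
    have h1 : x i - ∑ j, (V i j : ℝ) * y j = k i := by
      have h2 : k i + B y i = x i := by rw [← hsum]; simp [hy]
      rw [← h2, hBapp y i]
      simp [hM]
    rw [h1]
    rw [hK, Set.mem_Icc] at hk
    exact Set.mem_Icc.mpr ⟨hk.1 i, hk.2 i⟩
  have hconv : Convex ℝ S := (convex_Icc _ _).add (LinearMap.range B).convex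
  have hclosed : IsClosed S :=
    IsClosed.add_left_of_isCompact (LinearMap.range B).closed_of_finiteDimensional isCompact_Icc
  obtain ⟨f, u, hfS, hfx⟩ := geometric_hahn_banach_closed_point hconv hclosed hxS
  set c : Fin n → ℝ := fun i => f (Pi.single i 1) with hc
  have hfrep : ∀ z : Fin n → ℝ, f z = ∑ i, z i * c i := by
    intro z
    have h1 : z = ∑ i, z i • (Pi.single i (1:ℝ) : Fin n → ℝ) := by
      have h0 : ∀ i, z i • (Pi.single i (1:ℝ) : Fin n → ℝ) = Pi.single i (z i) := fun i => by
        funext j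
        simp [Pi.single_apply, mul_ite]
      simp only [h0]
      exact (Finset.univ_sum_single z).symm
    conv_lhs => rw [h1]
    rw [map_sum]
    exact Finset.sum_congr rfl (fun i _ => by rw [_root_.map_smul]; simp [hc])
  have hkerf : ∀ y : Fin d → ℝ, f (B y) = 0 := by
    intro y
    apply eq_zero_of_forall_mul_lt (u := u)
    intro t
    have hmem : (0 : Fin n → ℝ) + B (t • y) ∈ S := by
      rw [hS, Set.mem_add]
      exact ⟨0, Set.mem_Icc.mpr ⟨le_refl _, zero_le_one⟩, B (t • y),
        LinearMap.mem_range_self B _, by rw [zero_add]⟩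
    have := hfS _ hmem
    rw [zero_add, _root_.map_smul] at this
    simpa using this
  have hker : Zker V c := by
    intro j
    have h1 := hkerf (Pi.single j 1)
    have h2 : B (Pi.single j 1) = fun i => M i j := by
      rw [hB, Matrix.mulVecLin_apply, Matrix.mulVec_single]
      funext i
      simp
    rw [h2, hfrep] at h1
    rw [← h1]
    refine Finset.sum_congr rfl (fun i _ => ?_)
    simp [hM, mul_comm]
  refine ⟨c, hker, ?_⟩
  set zp : Fin n → ℝ := fun i => if 0 < c i then 1 else 0 with hzp
  have hzpK : zp ∈ K := by
    rw [hK, Set.mem_Icc]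
    constructor
    · intro i
      show (0:ℝ) ≤ zp i
      rw [hzp]
      dsimp only
      split <;> norm_num
    · intro i
      show zp i ≤ (1:ℝ)
      rw [hzp]
      dsimp only
      split <;> norm_num
  have hzpS : zp ∈ S := by
    rw [hS, Set.mem_add]
    exact ⟨zp, hzpK, 0, Submodule.zero_mem _, by rw [add_zero]⟩
  have h3 := hfS _ hzpS
  rw [hfrep] at h3
  have h4 : ∑ i, zp i * c i = ∑ i, max (c i) 0 := by
    refine Finset.sum_congr rfl (fun i _ => ?_)
    rw [hzp]
    dsimp only
    by_cases h : 0 < c i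
    · rw [if_pos h, one_mul, max_eq_left (le_of_lt h)]
    · rw [if_neg h, zero_mul, max_eq_right (not_lt.mp h)]
  rw [h4] at h3
  rw [hfrep] at hfx
  have h5 : ∑ i, x i * c i = ∑ i, c i * x i :=
    Finset.sum_congr rfl (fun i _ => mul_comm _ _)
  rw [h5] at hfx
  linarith

end ZonAux


theorem zonotope_closed_description
    (d n : ℕ) (hd : 1 ≤ d) (hn : 1 ≤ n)
    (V : Fin n → Fin d → ℤ) (hV : GoodGens V) (x : Fin n → ℝ) :
    (∃ y : Fin d → ℝ, ∀ i, x i - ∑ j, (V i j : ℝ) * y j ∈ Set.Icc (0:ℝ) 1) ↔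
    (∀ C : Finset (Fin n), IsCircuitV V C →
      ∀ a : Fin n → ℤ,
        (∀ j, ∑ i, a i * V i j = 0) →
        Finset.univ.gcd a = 1 →
        (∀ i, a i ≠ 0 ↔ i ∈ C) →
        (-(∑ i, max (-(a i : ℝ)) 0) ≤ ∑ i, (a i : ℝ) * x i ∧
          ∑ i, (a i : ℝ) * x i ≤ ∑ i, max ((a i : ℝ)) 0)) := by
  constructor
  · rintro ⟨y, hy⟩ C hcirc a haker hgcd hasupp
    set z : Fin n → ℝ := fun i => x i - ∑ j, (V i j : ℝ) * y j with hz
    have hz01 : ∀ i, 0 ≤ z i ∧ z i ≤ 1 := fun i => Set.mem_Icc.mp (hy i)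
    have hakerR : ∀ j, ∑ i, (a i : ℝ) * (V i j : ℝ) = 0 := by
      intro j
      have h2 : ((∑ i, a i * V i j : ℤ) : ℝ) = 0 := by rw [haker j]; simp
      push_cast at h2
      exact h2
    have hkey : ∑ i, (a i : ℝ) * x i
        = ∑ i, (a i : ℝ) * z i + ∑ j, (∑ i, (a i : ℝ) * (V i j : ℝ)) * y j := by
      have h1 : ∀ i, (a i : ℝ) * x i
          = (a i : ℝ) * z i + ∑ j, (a i : ℝ) * (V i j : ℝ) * y j := by
        intro i
        have hzi : z i = x i - ∑ j, (V i j : ℝ) * y j := rfl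
        have h2 : ∑ j, (a i : ℝ) * (V i j : ℝ) * y j
            = (a i : ℝ) * ∑ j, (V i j : ℝ) * y j := by
          rw [Finset.mul_sum]
          exact Finset.sum_congr rfl fun j _ => by ring
        rw [h2, hzi]
        ring
      rw [Finset.sum_congr rfl (fun i _ => h1 i), Finset.sum_add_distrib]
      congr 1
      rw [Finset.sum_comm]
      refine Finset.sum_congr rfl (fun j _ => ?_)
      rw [Finset.sum_mul]
    have h0 : ∑ j, (∑ i, (a i : ℝ) * (V i j : ℝ)) * y j = 0 := by
      rw [Finset.sum_congr rfl
        (fun j (_ : j ∈ (Finset.univ : Finset (Fin d))) => by rw [hakerR j, zero_mul])]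
      exact Finset.sum_const_zero
    rw [h0, add_zero] at hkey
    constructor
    · rw [hkey]
      have h1 : ∀ i, -(max (-(a i : ℝ)) 0) ≤ (a i : ℝ) * z i := by
        intro i
        obtain ⟨h0, h1'⟩ := hz01 i
        rcases le_or_gt 0 ((a i : ℝ)) with ha | ha
        · rw [max_eq_right (by linarith : -(a i : ℝ) ≤ 0)]
          simpa using mul_nonneg ha h0
        · rw [max_eq_left (by linarith : (0:ℝ) ≤ -(a i : ℝ))]
          have h3 := mul_le_mul_of_nonpos_left h1' (le_of_lt ha)
          linarith
      calc -(∑ i, max (-(a i : ℝ)) 0) = ∑ i, -(max (-(a i : ℝ)) 0) := by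
            rw [Finset.sum_neg_distrib]
        _ ≤ ∑ i, (a i : ℝ) * z i := Finset.sum_le_sum fun i _ => h1 i
    · rw [hkey]
      refine Finset.sum_le_sum fun i _ => ?_
      obtain ⟨h0, h1'⟩ := hz01 i
      rcases le_or_gt 0 ((a i : ℝ)) with ha | ha
      · rw [max_eq_left ha]
        nlinarith
      · rw [max_eq_right (le_of_lt ha)]
        exact mul_nonpos_of_nonpos_of_nonneg (le_of_lt ha) h0
  · intro H
    by_contra hx
    obtain ⟨c, hker, hlt⟩ := ZonAux.separation hx
    have hbound := ZonAux.sum_le_of_ker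
      (fun e he hek hcir => ZonAux.elementary_bound H he hek hcir) c hker
    linarith
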